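/- arXiv:math/9805096 — 2 statements merged into one kernel-verified Lean document; each statement's English description precedes it below -/
import Mathlib

section
/- Let K be a field and let L be the field of fractions of the polynomial ring K[X_t : t ∈ K]. For all distinct r, s ∈ K and every F in the subfield L_{{r,s}} generated by the variables X_t with t ∉ {r, s}, one has ψ(r)(ψ⁺(s)(F)) = −ψ⁺(s)(ψ(r)(F)). -/
noncomputable section

/-- The field `L`: the field of fractions of the polynomial ring `K[X_t : t ∈ K]`
in variables indexed by the elements of `K`. -/
abbrev LL (K : Type*) [Field K] := FractionRing (MvPolynomial K K)

variable (K : Type*) [Field K]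

/-- The variable `X_t` viewed inside `L`. -/
def Xv (t : K) : LL K :=
  algebraMap (MvPolynomial K K) (LL K) (MvPolynomial.X t)

/-- The constant `k ∈ K` viewed inside `L`. -/
def Cv (k : K) : LL K :=
  algebraMap (MvPolynomial K K) (LL K) (MvPolynomial.C k)

/-- The subfield `L_P ⊆ L` generated over `K` by the variables `X_t` with `t ∉ P`. -/
def LP (P : Set K) : Subfield (LL K) :=
  Subfield.closure (Set.range (Cv K) ∪ Xv K '' Pᶜ)

lemma const_mem (P : Set K) (k : K) : Cv K k ∈ LP K P :=
  Subfield.subset_closure (Or.inl ⟨k, rfl⟩)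

lemma Xv_mem {P : Set K} {t : K} (ht : t ∉ P) : Xv K t ∈ LP K P :=
  Subfield.subset_closure (Or.inr ⟨t, ht, rfl⟩)

lemma LP_anti {P Q : Set K} (h : P ⊆ Q) : LP K Q ≤ LP K P :=
  Subfield.closure_mono
    (Set.union_subset_union_right _
      (Set.image_mono (Set.compl_subset_compl.mpr h)))

/-- `ρ : L_P → L` is the `K`-algebra field embedding determined by the assignment
`X_t ↦ g t` on the generators `X_t`, `t ∉ P`. -/
def IsEmb (P : Set K) (g : K → LL K) (ρ : ↥(LP K P) →+* LL K) : Prop :=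
  (∀ k : K, ρ ⟨Cv K k, const_mem K P k⟩ = Cv K k) ∧
  ∀ (t : K) (ht : t ∉ P), ρ ⟨Xv K t, Xv_mem K ht⟩ = g t

end

lemma pair_sub_left {α : Type*} (r r' : α) : ({r} : Set α) ⊆ {r, r'} := by
  intro x hx; simp only [Set.mem_singleton_iff] at hx; simp [hx]

lemma pair_sub_right {α : Type*} (r r' : α) : ({r'} : Set α) ⊆ {r, r'} := by
  intro x hx; simp only [Set.mem_singleton_iff] at hx; simp [hx]


section AuxLemmas

variable {K : Type*} [Field K]

variable {E F : Type*} [Field E] [Field F]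

lemma mem_of_eqv {S : Subfield E} {a b : E} (e : a = b) (h : b ∈ S) : a ∈ S :=
  e ▸ h

lemma rho_congr {S : Subfield E} (ρ : ↥S →+* F) {a b : E}
    (ha : a ∈ S) (hb : b ∈ S) (e : a = b) : ρ ⟨a, ha⟩ = ρ ⟨b, hb⟩ := by
  subst e; rfl

lemma rho_apply_mul {S : Subfield E} (ρ : ↥S →+* F) {a b : E}
    (ha : a ∈ S) (hb : b ∈ S) (h : a * b ∈ S) :
    ρ ⟨a * b, h⟩ = ρ ⟨a, ha⟩ * ρ ⟨b, hb⟩ :=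
  map_mul ρ ⟨a, ha⟩ ⟨b, hb⟩

lemma rho_apply_add {S : Subfield E} (ρ : ↥S →+* F) {a b : E}
    (ha : a ∈ S) (hb : b ∈ S) (h : a + b ∈ S) :
    ρ ⟨a + b, h⟩ = ρ ⟨a, ha⟩ + ρ ⟨b, hb⟩ :=
  ρ.map_add ⟨a, ha⟩ ⟨b, hb⟩

lemma rho_apply_neg {S : Subfield E} (ρ : ↥S →+* F) {a : E}
    (ha : a ∈ S) (h : -a ∈ S) : ρ ⟨-a, h⟩ = -ρ ⟨a, ha⟩ :=
  ρ.map_neg ⟨a, ha⟩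

lemma rho_apply_inv {S : Subfield E} (ρ : ↥S →+* F) {a : E}
    (ha : a ∈ S) (h : a⁻¹ ∈ S) : ρ ⟨a⁻¹, h⟩ = (ρ ⟨a, ha⟩)⁻¹ :=
  map_inv₀ ρ ⟨a, ha⟩

lemma rho_apply_one {S : Subfield E} (ρ : ↥S →+* F) (h : (1 : E) ∈ S) :
    ρ ⟨1, h⟩ = 1 :=
  map_one ρ

/-- `Cv` as a ring homomorphism. -/
noncomputable def CvHom (K : Type*) [Field K] : K →+* LL K :=
  (algebraMap (MvPolynomial K K) (LL K)).comp MvPolynomial.C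

lemma CvHom_apply (k : K) : CvHom K k = Cv K k := rfl

lemma Cv_inv (k : K) : Cv K (k⁻¹) = (Cv K k)⁻¹ := by
  rw [← CvHom_apply, ← CvHom_apply, map_inv₀]

lemma Cv_neg (k : K) : Cv K (-k) = -(Cv K k) := by
  rw [← CvHom_apply, ← CvHom_apply, map_neg]

end AuxLemmas

/-- Key lemma: on `L_{{r,s}}` the maps `ρr` and `ρs` commute, and each maps
`L_{{r,s}}` into the appropriate subfield. -/
lemma key_comm (K : Type*) [Field K] (r s : K) (hrs : r ≠ s)
    (ρr : ↥(LP K {r}) →+* LL K) (ρs : ↥(LP K {s}) →+* LL K)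
    (hρr : IsEmb K {r} (fun t => Cv K (t - r) * Xv K t) ρr)
    (hρs : IsEmb K {s} (fun t => Cv K ((t - s)⁻¹) * Xv K t) ρs)
    (x : LL K) (hx : x ∈ LP K ({r, s} : Set K)) :
    ∃ (h1 : ρs ⟨x, LP_anti K (pair_sub_right r s) hx⟩ ∈ LP K ({r} : Set K))
      (h2 : ρr ⟨x, LP_anti K (pair_sub_left r s) hx⟩ ∈ LP K ({s} : Set K)),
      ρr ⟨ρs ⟨x, LP_anti K (pair_sub_right r s) hx⟩, h1⟩
        = ρs ⟨ρr ⟨x, LP_anti K (pair_sub_left r s) hx⟩, h2⟩ := by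
  refine Subfield.closure_induction
    (p := fun y hy =>
      ∃ (h1 : ρs ⟨y, LP_anti K (pair_sub_right r s) hy⟩ ∈ LP K ({r} : Set K))
        (h2 : ρr ⟨y, LP_anti K (pair_sub_left r s) hy⟩ ∈ LP K ({s} : Set K)),
        ρr ⟨ρs ⟨y, LP_anti K (pair_sub_right r s) hy⟩, h1⟩
          = ρs ⟨ρr ⟨y, LP_anti K (pair_sub_left r s) hy⟩, h2⟩)
    ?_ ?_ ?_ ?_ ?_ ?_ hx
  · -- generators
    rintro y (⟨k, rfl⟩ | ⟨t, ht, rfl⟩)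
    · have e1 : ρs ⟨Cv K k, const_mem K _ k⟩ = Cv K k := hρs.1 k
      have e2 : ρr ⟨Cv K k, const_mem K _ k⟩ = Cv K k := hρr.1 k
      refine ⟨mem_of_eqv e1 (const_mem K _ k), mem_of_eqv e2 (const_mem K _ k), ?_⟩
      rw [rho_congr ρr _ (const_mem K _ k) e1, rho_congr ρs _ (const_mem K _ k) e2,
        hρr.1 k, hρs.1 k]
    · have htr : t ∉ ({r} : Set K) := fun h => ht (pair_sub_left r s h)
      have hts : t ∉ ({s} : Set K) := fun h => ht (pair_sub_right r s h)
      have e1 : ρs ⟨Xv K t, Xv_mem K hts⟩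
          = Cv K ((t - s)⁻¹) * Xv K t := hρs.2 t hts
      have e2 : ρr ⟨Xv K t, Xv_mem K htr⟩
          = Cv K (t - r) * Xv K t := hρr.2 t htr
      have m1 : Cv K ((t - s)⁻¹) * Xv K t ∈ LP K ({r} : Set K) :=
        mul_mem (const_mem K _ _) (Xv_mem K htr)
      have m2 : Cv K (t - r) * Xv K t ∈ LP K ({s} : Set K) :=
        mul_mem (const_mem K _ _) (Xv_mem K hts)
      refine ⟨mem_of_eqv e1 m1, mem_of_eqv e2 m2, ?_⟩
      rw [rho_congr ρr _ m1 e1, rho_congr ρs _ m2 e2,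
        rho_apply_mul ρr (const_mem K _ _) (Xv_mem K htr) m1,
        rho_apply_mul ρs (const_mem K _ _) (Xv_mem K hts) m2,
        hρr.1, hρs.1, hρr.2 t htr, hρs.2 t hts]
      ring
  · -- one
    have e1 : ρs ⟨(1 : LL K), LP_anti K (pair_sub_right r s) (one_mem _)⟩ = 1 :=
      rho_apply_one ρs _
    have e2 : ρr ⟨(1 : LL K), LP_anti K (pair_sub_left r s) (one_mem _)⟩ = 1 :=
      rho_apply_one ρr _
    refine ⟨mem_of_eqv e1 (one_mem _), mem_of_eqv e2 (one_mem _), ?_⟩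
    rw [rho_congr ρr _ (one_mem _) e1, rho_congr ρs _ (one_mem _) e2,
      rho_apply_one, rho_apply_one]
  · -- add
    rintro x y hxm hym ⟨h1x, h2x, ex⟩ ⟨h1y, h2y, ey⟩
    have e1 : ρs ⟨x + y, LP_anti K (pair_sub_right r s) (add_mem hxm hym)⟩
        = ρs ⟨x, LP_anti K (pair_sub_right r s) hxm⟩
          + ρs ⟨y, LP_anti K (pair_sub_right r s) hym⟩ :=
      rho_apply_add ρs _ _ _
    have e2 : ρr ⟨x + y, LP_anti K (pair_sub_left r s) (add_mem hxm hym)⟩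
        = ρr ⟨x, LP_anti K (pair_sub_left r s) hxm⟩
          + ρr ⟨y, LP_anti K (pair_sub_left r s) hym⟩ :=
      rho_apply_add ρr _ _ _
    refine ⟨mem_of_eqv e1 (add_mem h1x h1y), mem_of_eqv e2 (add_mem h2x h2y), ?_⟩
    rw [rho_congr ρr _ (add_mem h1x h1y) e1, rho_congr ρs _ (add_mem h2x h2y) e2,
      rho_apply_add ρr h1x h1y, rho_apply_add ρs h2x h2y, ex, ey]
  · -- neg
    rintro x hxm ⟨h1x, h2x, ex⟩
    have e1 : ρs ⟨-x, LP_anti K (pair_sub_right r s) (neg_mem hxm)⟩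
        = -ρs ⟨x, LP_anti K (pair_sub_right r s) hxm⟩ :=
      rho_apply_neg ρs _ _
    have e2 : ρr ⟨-x, LP_anti K (pair_sub_left r s) (neg_mem hxm)⟩
        = -ρr ⟨x, LP_anti K (pair_sub_left r s) hxm⟩ :=
      rho_apply_neg ρr _ _
    refine ⟨mem_of_eqv e1 (neg_mem h1x), mem_of_eqv e2 (neg_mem h2x), ?_⟩
    rw [rho_congr ρr _ (neg_mem h1x) e1, rho_congr ρs _ (neg_mem h2x) e2,
      rho_apply_neg ρr h1x, rho_apply_neg ρs h2x, ex]
  · -- inv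
    rintro x hxm ⟨h1x, h2x, ex⟩
    have e1 : ρs ⟨x⁻¹, LP_anti K (pair_sub_right r s) (inv_mem hxm)⟩
        = (ρs ⟨x, LP_anti K (pair_sub_right r s) hxm⟩)⁻¹ :=
      rho_apply_inv ρs _ _
    have e2 : ρr ⟨x⁻¹, LP_anti K (pair_sub_left r s) (inv_mem hxm)⟩
        = (ρr ⟨x, LP_anti K (pair_sub_left r s) hxm⟩)⁻¹ :=
      rho_apply_inv ρr _ _
    refine ⟨mem_of_eqv e1 (inv_mem h1x), mem_of_eqv e2 (inv_mem h2x), ?_⟩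
    rw [rho_congr ρr _ (inv_mem h1x) e1, rho_congr ρs _ (inv_mem h2x) e2,
      rho_apply_inv ρr h1x, rho_apply_inv ρs h2x, ex]
  · -- mul
    rintro x y hxm hym ⟨h1x, h2x, ex⟩ ⟨h1y, h2y, ey⟩
    have e1 : ρs ⟨x * y, LP_anti K (pair_sub_right r s) (mul_mem hxm hym)⟩
        = ρs ⟨x, LP_anti K (pair_sub_right r s) hxm⟩
          * ρs ⟨y, LP_anti K (pair_sub_right r s) hym⟩ :=
      rho_apply_mul ρs _ _ _
    have e2 : ρr ⟨x * y, LP_anti K (pair_sub_left r s) (mul_mem hxm hym)⟩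
        = ρr ⟨x, LP_anti K (pair_sub_left r s) hxm⟩
          * ρr ⟨y, LP_anti K (pair_sub_left r s) hym⟩ :=
      rho_apply_mul ρr _ _ _
    refine ⟨mem_of_eqv e1 (mul_mem h1x h1y), mem_of_eqv e2 (mul_mem h2x h2y), ?_⟩
    rw [rho_congr ρr _ (mul_mem h1x h1y) e1, rho_congr ρs _ (mul_mem h2x h2y) e2,
      rho_apply_mul ρr h1x h1y, rho_apply_mul ρs h2x h2y, ex, ey]

/-- Anticommutation of `ψ(r)` and `ψ⁺(s)` for `r ≠ s`:
`ψ(r)(ψ⁺(s)(F)) = −ψ⁺(s)(ψ(r)(F))` for every `F ∈ L_{{r,s}}`.  Here `ψ(r)` is the `K`-algebra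
field embedding determined by `X_t ↦ (t−r)·X_t` followed by multiplication by `X_r`, and
`ψ⁺(s)` is the embedding determined by `X_t ↦ (t−s)⁻¹·X_t` followed by multiplication by
`X_s⁻¹`; `G = ψ⁺(s)(F)`, `G' = ψ(r)(F)`. -/
theorem psi_psiPlus_anticommute
    (K : Type*) [Field K] (r s : K) (hrs : r ≠ s)
    (ρr : ↥(LP K {r}) →+* LL K) (ρs : ↥(LP K {s}) →+* LL K)
    (hρr : IsEmb K {r} (fun t => Cv K (t - r) * Xv K t) ρr)
    (hρs : IsEmb K {s} (fun t => Cv K ((t - s)⁻¹) * Xv K t) ρs)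
    (F : LL K) (hF : F ∈ LP K ({r, s} : Set K))
    (G G' : LL K)
    (hG : G ∈ LP K ({r} : Set K)) (hG' : G' ∈ LP K ({s} : Set K))
    (hGe : G = (Xv K s)⁻¹ * ρs ⟨F, LP_anti K (pair_sub_right r s) hF⟩)
    (hG'e : G' = Xv K r * ρr ⟨F, LP_anti K (pair_sub_left r s) hF⟩) :
    Xv K r * ρr ⟨G, hG⟩ = -((Xv K s)⁻¹ * ρs ⟨G', hG'⟩) := by
  obtain ⟨h1, h2, hcomm⟩ := key_comm K r s hrs ρr ρs hρr hρs F hF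
  subst hGe hG'e
  have hsr : s ∉ ({r} : Set K) := by simpa using hrs.symm
  have hrs' : r ∉ ({s} : Set K) := by simpa using hrs
  have mXs : (Xv K s)⁻¹ ∈ LP K ({r} : Set K) := inv_mem (Xv_mem K hsr)
  have mXr : Xv K r ∈ LP K ({s} : Set K) := Xv_mem K hrs'
  rw [rho_apply_mul ρr mXs h1 hG, rho_apply_mul ρs mXr h2 hG',
    rho_apply_inv ρr (Xv_mem K hsr), hρr.2 s hsr, hρs.2 r hrs', hcomm]
  have hc : Cv K ((r - s)⁻¹) = -(Cv K (s - r))⁻¹ := by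
    have h0 : (r - s)⁻¹ = -((s - r)⁻¹) := by rw [← neg_sub s r, inv_neg]
    rw [h0, Cv_neg, Cv_inv]
  simp only [hc, mul_inv_rev]
  ring
end

section
/- Let ε > 0, let r ∈ ℂ with 0 < |r| < ε, let L ≥ 1, let a₁,…,a_L ∈ ℂ, and let g : ℂ → ℂ be complex-differentiable at every point of {s ∈ ℂ : 0 < |s| < ε}. Define f(s) = Σ_{l=1}^{L} a_l·(s−r)^{−l} + g(s) for s ∉ {0, r}. Then for every integer k' and all radii β, γ with 0 < β < |r| < γ < ε, one has (1/(2πi))·( ∮_{|s|=γ} f(s)·s^{−k'−1} ds − ∮_{|s|=β} f(s)·s^{−k'−1} ds ) = Σ_{l=1}^{L} a_l · C(−k'−1, l−1) · r^{−k'−l}, where C(w, m) = w(w−1)⋯(w−m+1)/m! is the generalized binomial coefficient and both circle integrals are counterclockwise circles centered at 0. -/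
open Complex Metric Finset

namespace LaurentAux

noncomputable def bin (x : ℂ) (m : ℕ) : ℂ := (∏ i ∈ Finset.range m, (x - i)) / m.factorial

lemma bin_pascal (x : ℂ) (m : ℕ) :
    bin x (m + 1) = bin (x - 1) m + bin (x - 1) (m + 1) := by
  unfold bin
  have h1 : ∏ i ∈ Finset.range (m + 1), (x - i)
      = (∏ i ∈ Finset.range m, (x - 1 - i)) * x := by
    rw [Finset.prod_range_succ']
    congr 1
    · apply Finset.prod_congr rfl
      intro i _
      push_cast
      ring
    · simp
  have h2 : ∏ i ∈ Finset.range (m + 1), (x - 1 - i) =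
      (∏ i ∈ Finset.range m, (x - 1 - i)) * (x - 1 - m) := Finset.prod_range_succ _ _
  rw [h1, h2]
  have hm : ((m.factorial : ℂ)) ≠ 0 := by exact_mod_cast m.factorial_ne_zero
  have hm1 : (((m + 1).factorial : ℂ)) ≠ 0 := by exact_mod_cast (m + 1).factorial_ne_zero
  have hfac : (((m + 1).factorial : ℂ)) = (m + 1) * m.factorial := by
    push_cast [Nat.factorial_succ]
    ring
  have hm2 : ((m : ℂ) + 1) ≠ 0 := Nat.cast_add_one_ne_zero m
  rw [hfac]
  field_simp
  ring

lemma bin_zero (x : ℂ) : bin x 0 = 1 := by simp [bin]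

lemma sphere_ne_zero {ρ : ℝ} (hρ : 0 < ρ) {z : ℂ} (hz : z ∈ sphere (0 : ℂ) ρ) : z ≠ 0 := by
  have : ‖z‖ = ρ := mem_sphere_zero_iff_norm.mp hz
  intro h
  rw [h] at this
  simp at this
  exact absurd this.symm hρ.ne' 

lemma sphere_ne_r {r z : ℂ} {ρ : ℝ} (hne : ‖r‖ ≠ ρ) (hz : z ∈ sphere (0 : ℂ) ρ) :
    z ≠ r := by
  have hz' : ‖z‖ = ρ := mem_sphere_zero_iff_norm.mp hz
  intro h
  subst h
  apply hne
  rw [← hz']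

lemma contOn (r : ℂ) (m n : ℤ) {ρ : ℝ} (hρ : 0 < ρ) (hne : ‖r‖ ≠ ρ) :
    ContinuousOn (fun z : ℂ => (z - r) ^ m * z ^ n) (sphere (0 : ℂ) ρ) := by
  intro z hz
  have hz0 : z ≠ 0 := sphere_ne_zero hρ hz
  have hzr : z - r ≠ 0 := sub_ne_zero.mpr (sphere_ne_r hne hz)
  apply ContinuousAt.continuousWithinAt
  exact ((continuousAt_id.sub continuousAt_const).zpow₀ m (Or.inl hzr)).mul
    (continuousAt_id.zpow₀ n (Or.inl hz0))

lemma cI_add {f g : ℂ → ℂ} {c : ℂ} {R : ℝ} (hf : CircleIntegrable f c R)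
    (hg : CircleIntegrable g c R) :
    (∮ z in C(c, R), (f z + g z)) = (∮ z in C(c, R), f z) + ∮ z in C(c, R), g z := by
  simp only [circleIntegral, smul_add, intervalIntegral.integral_add hf.out hg.out]

lemma cI_sum_integrable {ι : Type*} (t : Finset ι) (f : ι → ℂ → ℂ) (c : ℂ) (R : ℝ)
    (h : ∀ i ∈ t, CircleIntegrable (f i) c R) :
    CircleIntegrable (fun z => ∑ i ∈ t, f i z) c R := by
  induction t using Finset.cons_induction with
  | empty => simpa using circleIntegrable_const (0 : ℂ) c R
  | cons i t hit ih =>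
    simp only [Finset.sum_cons]
    exact (h i (Finset.mem_cons_self _ _)).add (ih fun j hj => h j (Finset.mem_cons_of_mem hj))

lemma cI_sum {ι : Type*} (t : Finset ι) (f : ι → ℂ → ℂ) (c : ℂ) (R : ℝ)
    (h : ∀ i ∈ t, CircleIntegrable (f i) c R) :
    (∮ z in C(c, R), ∑ i ∈ t, f i z) = ∑ i ∈ t, ∮ z in C(c, R), f i z := by
  induction t using Finset.cons_induction with
  | empty => simp [circleIntegral]
  | cons i t hit ih =>
    simp only [Finset.sum_cons]
    rw [cI_add (h i (Finset.mem_cons_self _ _))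
      (cI_sum_integrable t f c R fun j hj => h j (Finset.mem_cons_of_mem hj)),
      ih fun j hj => h j (Finset.mem_cons_of_mem hj)]

lemma rec_step (r : ℂ) {ρ : ℝ} (hρ : 0 < ρ) (hne : ‖r‖ ≠ ρ) (m n : ℤ) :
    (∮ z in C(0, ρ), (z - r) ^ (m - 1) * z ^ (n + 1))
      = (∮ z in C(0, ρ), (z - r) ^ m * z ^ n)
        + r * ∮ z in C(0, ρ), (z - r) ^ (m - 1) * z ^ n := by
  have h1 : CircleIntegrable (fun z : ℂ => (z - r) ^ m * z ^ n) 0 ρ :=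
    (contOn r m n hρ hne).circleIntegrable hρ.le
  have h2 : CircleIntegrable (fun z : ℂ => r * ((z - r) ^ (m - 1) * z ^ n)) 0 ρ :=
    (continuousOn_const.mul (contOn r (m - 1) n hρ hne)).circleIntegrable hρ.le
  rw [← circleIntegral.integral_const_mul, ← cI_add h1 h2]
  apply circleIntegral.integral_congr hρ.le
  intro z hz
  have hz0 : z ≠ 0 := sphere_ne_zero hρ hz
  have hzr : z - r ≠ 0 := sub_ne_zero.mpr (sphere_ne_r hne hz)
  have e1 : z ^ (n + 1) = z ^ n * z := zpow_add_one₀ hz0 n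
  have e2 : (z - r) ^ m = (z - r) ^ (m - 1) * (z - r) := by
    rw [← zpow_add_one₀ hzr, sub_add_cancel]
  simp only
  rw [e1, e2]
  ring

lemma diff_zero_order (r : ℂ) {β γ : ℝ} (hβ : 0 < β) (hβγ : β ≤ γ) (n : ℤ) :
    (∮ z in C(0, γ), (z - r) ^ (0 : ℤ) * z ^ n)
      = (∮ z in C(0, β), (z - r) ^ (0 : ℤ) * z ^ n) := by
  have hγ : 0 < γ := lt_of_lt_of_le hβ hβγ
  have key : ∀ ρ : ℝ, (∮ z in C(0, ρ), (z - r) ^ (0 : ℤ) * z ^ n)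
      = (∮ z in C(0, ρ), (z - (0 : ℂ)) ^ n) := by
    intro ρ
    congr 1
    funext z
    simp
  rw [key γ, key β]
  rcases eq_or_ne n (-1) with rfl | hn
  · have k2 : ∀ ρ : ℝ, (∮ z in C(0, ρ), (z - (0 : ℂ)) ^ (-1 : ℤ))
        = (∮ z in C(0, ρ), (z - (0 : ℂ))⁻¹) := by
      intro ρ
      congr 1
      funext z
      simp [zpow_neg_one]
    rw [k2 γ, k2 β, circleIntegral.integral_sub_center_inv _ hγ.ne',
      circleIntegral.integral_sub_center_inv _ hβ.ne']
  · rw [circleIntegral.integral_sub_zpow_of_ne hn, circleIntegral.integral_sub_zpow_of_ne hn]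

lemma diff_eq (r : ℂ) (hr0 : r ≠ 0) {β γ : ℝ} (hβ : 0 < β) (hβr : β < ‖r‖)
    (hrγ : ‖r‖ < γ) (l : ℕ) :
    ∀ n : ℤ,
      (∮ z in C(0, γ), (z - r) ^ (-(l : ℤ) - 1) * z ^ n)
        - (∮ z in C(0, β), (z - r) ^ (-(l : ℤ) - 1) * z ^ n)
      = (2 * Real.pi * Complex.I) * bin (n : ℂ) l * r ^ (n - l) := by
  have hγ0 : (0 : ℝ) < γ := lt_trans (lt_trans hβ hβr) hrγ
  have hneγ : ‖r‖ ≠ γ := ne_of_lt hrγ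
  have hneβ : ‖r‖ ≠ β := ne_of_gt hβr
  have hβγ : β ≤ γ := le_of_lt (lt_trans hβr hrγ)
  induction l with
  | zero =>
    intro n
    induction n using Int.induction_on with
    | zero =>
      have e : (fun z : ℂ => (z - r) ^ (-((0 : ℕ) : ℤ) - 1) * z ^ (0 : ℤ))
          = fun z : ℂ => (z - r)⁻¹ := by
        funext z
        rw [zpow_zero, mul_one]
        norm_num
      have hbig : (∮ z in C(0, γ), (z - r) ^ (-((0 : ℕ) : ℤ) - 1) * z ^ (0 : ℤ))
          = 2 * Real.pi * Complex.I := by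
        rw [e]
        exact circleIntegral.integral_sub_inv_of_mem_ball
          (by simpa [mem_ball_zero_iff] using hrγ)
      have hsmall : (∮ z in C(0, β), (z - r) ^ (-((0 : ℕ) : ℤ) - 1) * z ^ (0 : ℤ)) = 0 := by
        rw [e]
        apply Complex.circleIntegral_eq_zero_of_differentiable_on_off_countable hβ.le
          Set.countable_empty
        · intro z hz
          have hzr : z - r ≠ 0 := by
            rw [sub_ne_zero]
            intro h
            have : ‖z‖ ≤ β := mem_closedBall_zero_iff.mp hz
            rw [h] at this
            linarith
          exact ((continuousAt_id.sub continuousAt_const).inv₀ hzr).continuousWithinAt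
        · intro z hz
          have hzr : z - r ≠ 0 := by
            rw [sub_ne_zero]
            intro h
            have : ‖z‖ < β := mem_ball_zero_iff.mp hz.1
            rw [h] at this
            linarith
          exact (differentiableAt_id.sub (differentiableAt_const r)).inv hzr
      rw [hbig, hsmall, bin_zero]
      simp
    | succ n ihn =>
      simp only [Nat.cast_zero, neg_zero, zero_sub, sub_zero] at ihn ⊢
      have h1 := rec_step r hγ0 hneγ (0 : ℤ) (n : ℤ)
      have h2 := rec_step r hβ hneβ (0 : ℤ) (n : ℤ)
      have h0 := diff_zero_order r hβ hβγ (n : ℤ)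
      simp only [zero_sub] at h1 h2
      have hrpow : r ^ ((n : ℤ) + 1) = r * r ^ ((n : ℤ)) := by
        rw [zpow_add_one₀ hr0]
        ring
      rw [bin_zero] at ihn ⊢
      linear_combination h1 - h2 + h0 + r * ihn - 2 * Real.pi * Complex.I * hrpow
    | pred n ihn =>
      simp only [Nat.cast_zero, neg_zero, zero_sub, sub_zero] at ihn ⊢
      have h1 := rec_step r hγ0 hneγ (0 : ℤ) (-(n : ℤ) - 1)
      have h2 := rec_step r hβ hneβ (0 : ℤ) (-(n : ℤ) - 1)
      have h0 := diff_zero_order r hβ hβγ (-(n : ℤ) - 1)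
      have e1 : (-(n : ℤ) - 1 + 1) = -(n : ℤ) := by ring
      simp only [zero_sub] at h1 h2
      rw [e1] at h1 h2
      have hrpow : r * r ^ (-(n : ℤ) - 1) = r ^ (-(n : ℤ)) := by
        rw [show (-(n : ℤ)) = (-(n : ℤ) - 1) + 1 by ring, zpow_add_one₀ hr0]
        ring
      rw [bin_zero] at ihn ⊢
      refine mul_left_cancel₀ hr0 ?_
      linear_combination -h1 + h2 - h0 + ihn - 2 * Real.pi * Complex.I * hrpow
  | succ l ihl =>
    intro n
    induction n using Int.induction_on with
    | zero =>
      have hne1 : (-((l + 1 : ℕ) : ℤ) - 1) ≠ -1 := by omega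
      have e : (fun z : ℂ => (z - r) ^ (-((l + 1 : ℕ) : ℤ) - 1) * z ^ (0 : ℤ))
          = fun z : ℂ => (z - r) ^ (-((l + 1 : ℕ) : ℤ) - 1) := by
        funext z
        rw [zpow_zero, mul_one]
      have hb : bin (((0 : ℤ) : ℂ)) (l + 1) = 0 := by
        unfold bin
        rw [Finset.prod_eq_zero (Finset.mem_range.mpr (Nat.succ_pos l)) (by simp)]
        simp
      rw [e, circleIntegral.integral_sub_zpow_of_ne hne1,
        circleIntegral.integral_sub_zpow_of_ne hne1, hb]
      ring
    | succ n ihn =>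
      have h1 := rec_step r hγ0 hneγ (-((l + 1 : ℕ) : ℤ)) (n : ℤ)
      have h2 := rec_step r hβ hneβ (-((l + 1 : ℕ) : ℤ)) (n : ℤ)
      have e0 : (-((l + 1 : ℕ) : ℤ)) = -((l : ℕ) : ℤ) - 1 := by push_cast; ring
      rw [e0] at h1 h2 ihn ⊢
      have hpas := bin_pascal ((((n : ℤ) + 1 : ℤ)) : ℂ) l
      rw [show ((((n : ℤ) + 1 : ℤ)) : ℂ) - 1 = (((n : ℤ)) : ℂ) by push_cast; ring] at hpas
      have hpow1 : r ^ ((n : ℤ) + 1 - ((l + 1 : ℕ) : ℤ)) = r ^ ((n : ℤ) - ((l : ℕ) : ℤ)) := by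
        congr 1
        push_cast
        ring
      have hpow2 : r * r ^ ((n : ℤ) - ((l + 1 : ℕ) : ℤ)) = r ^ ((n : ℤ) - ((l : ℕ) : ℤ)) := by
        rw [show ((n : ℤ) - ((l : ℕ) : ℤ)) = ((n : ℤ) - ((l + 1 : ℕ) : ℤ)) + 1 by push_cast; ring,
          zpow_add_one₀ hr0]
        ring
      rw [hpow1, hpas]
      linear_combination h1 - h2 + ihl (n : ℤ) + r * ihn
        + 2 * Real.pi * Complex.I * bin (((n : ℤ)) : ℂ) (l + 1) * hpow2
    | pred n ihn =>
      have h1 := rec_step r hγ0 hneγ (-((l + 1 : ℕ) : ℤ)) (-(n : ℤ) - 1)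
      have h2 := rec_step r hβ hneβ (-((l + 1 : ℕ) : ℤ)) (-(n : ℤ) - 1)
      have e0 : (-((l + 1 : ℕ) : ℤ)) = -((l : ℕ) : ℤ) - 1 := by push_cast; ring
      have e1 : (-(n : ℤ) - 1 + 1) = -(n : ℤ) := by ring
      rw [e0, e1] at h1 h2
      rw [e0] at ihn ⊢
      have hpas := bin_pascal (((-(n : ℤ) : ℤ)) : ℂ) l
      rw [show (((-(n : ℤ) : ℤ)) : ℂ) - 1 = (((-(n : ℤ) - 1 : ℤ)) : ℂ) by push_cast; ring] at hpas
      have hpow2 : r * r ^ (-(n : ℤ) - 1 - ((l + 1 : ℕ) : ℤ)) = r ^ (-(n : ℤ) - ((l + 1 : ℕ) : ℤ)) := by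
        rw [show (-(n : ℤ) - ((l + 1 : ℕ) : ℤ)) = (-(n : ℤ) - 1 - ((l + 1 : ℕ) : ℤ)) + 1 by ring,
          zpow_add_one₀ hr0]
        ring
      have hpow4 : r ^ (-(n : ℤ) - ((l + 1 : ℕ) : ℤ)) = r ^ (-(n : ℤ) - 1 - ((l : ℕ) : ℤ)) := by
        congr 1
        push_cast
        ring
      refine mul_left_cancel₀ hr0 ?_
      rw [hpas] at ihn
      linear_combination -h1 + h2 + ihn - ihl (-(n : ℤ) - 1)
        - 2 * Real.pi * Complex.I * bin (((-(n : ℤ) - 1 : ℤ)) : ℂ) (l + 1) * hpow2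
        + 2 * Real.pi * Complex.I * bin (((-(n : ℤ) - 1 : ℤ)) : ℂ) l * hpow4

lemma g_diff {ε : ℝ} {g : ℂ → ℂ}
    (hg : ∀ s : ℂ, s ≠ 0 → ‖s‖ < ε → DifferentiableAt ℂ g s)
    (n : ℤ) {β γ : ℝ} (hβ : 0 < β) (hβγ : β ≤ γ) (hγε : γ < ε) :
    (∮ z in C(0, γ), g z * z ^ n) = ∮ z in C(0, β), g z * z ^ n := by
  apply Complex.circleIntegral_eq_of_differentiable_on_annulus_off_countable hβ hβγ
    Set.countable_empty
  · intro z hz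
    have hz0 : z ≠ 0 := by
      intro h
      exact hz.2 (by rw [h]; exact mem_ball_self hβ)
    have hzε : ‖z‖ < ε := by
      have h1 : ‖z‖ ≤ γ := mem_closedBall_zero_iff.mp hz.1
      linarith
    exact (((hg z hz0 hzε).continuousAt).mul
      (continuousAt_id.zpow₀ n (Or.inl hz0))).continuousWithinAt
  · intro z hz
    have hz0 : z ≠ 0 := by
      intro h
      exact hz.1.2 (by rw [h]; exact mem_closedBall_self hβ.le)
    have hzε : ‖z‖ < ε := by
      have h1 : ‖z‖ < γ := mem_ball_zero_iff.mp hz.1.1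
      linarith
    exact (hg z hz0 hzε).mul (differentiableAt_zpow.mpr (Or.inl hz0))

end LaurentAux

open LaurentAux in
/-- Difference of Laurent coefficients across the pole: let `f(s) = Σ_{l=1}^{L} a_l (s−r)^{−l}
+ g(s)` with `g` holomorphic on the punctured disk `{0 < |s| < ε}` and `0 < |r| < ε`.  For any
integer `k'` and radii `0 < β < |r| < γ < ε`,
`(1/2πi)·(∮_{|s|=γ} f(s)·s^{−k'−1} ds − ∮_{|s|=β} f(s)·s^{−k'−1} ds)
  = Σ_{l=1}^{L} a_l·C(−k'−1, l−1)·r^{−k'−l}`,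
where `C(w,m) = w(w−1)⋯(w−m+1)/m!`. -/
theorem laurentCoeff_difference_eq_binomial_residues
    (ε : ℝ) (hε : 0 < ε) (r : ℂ) (hr0 : r ≠ 0) (hrε : ‖r‖ < ε)
    (L : ℕ) (hL : 1 ≤ L) (a : ℕ → ℂ) (g : ℂ → ℂ)
    (hg : ∀ s : ℂ, s ≠ 0 → ‖s‖ < ε → DifferentiableAt ℂ g s)
    (k' : ℤ) (β γ : ℝ) (hβ : 0 < β) (hβr : β < ‖r‖)
    (hrγ : ‖r‖ < γ) (hγε : γ < ε) :
    (1 / (2 * Real.pi * Complex.I)) *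
        ((circleIntegral
            (fun s => (∑ l ∈ Finset.Icc 1 L, a l * (s - r) ^ (-(l : ℤ)) + g s) *
              s ^ (-k' - 1)) 0 γ) -
         (circleIntegral
            (fun s => (∑ l ∈ Finset.Icc 1 L, a l * (s - r) ^ (-(l : ℤ)) + g s) *
              s ^ (-k' - 1)) 0 β)) =
      ∑ l ∈ Finset.Icc 1 L,
        a l * ((∏ i ∈ Finset.range (l - 1), (((-k' - 1 : ℤ) : ℂ) - (i : ℂ))) /
          ((l - 1).factorial : ℂ)) * r ^ (-k' - (l : ℤ)) := by
  have hγ0 : (0 : ℝ) < γ := lt_trans (lt_trans hβ hβr) hrγ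
  have hβγ : β ≤ γ := le_of_lt (lt_trans hβr hrγ)
  have hneγ : ‖r‖ ≠ γ := ne_of_lt hrγ
  have hneβ : ‖r‖ ≠ β := ne_of_gt hβr
  have key : ∀ ρ : ℝ, 0 < ρ → ‖r‖ ≠ ρ → ρ < ε →
      circleIntegral
          (fun s => (∑ l ∈ Finset.Icc 1 L, a l * (s - r) ^ (-(l : ℤ)) + g s) *
            s ^ (-k' - 1)) 0 ρ
        = (∑ l ∈ Finset.Icc 1 L, a l * ∮ z in C(0, ρ), (z - r) ^ (-(l : ℤ)) * z ^ (-k' - 1))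
          + ∮ z in C(0, ρ), g z * z ^ (-k' - 1) := by
    intro ρ hρ hne hρε
    have hi : ∀ l ∈ Finset.Icc 1 L, CircleIntegrable
        (fun z : ℂ => a l * ((z - r) ^ (-(l : ℤ)) * z ^ (-k' - 1))) 0 ρ := fun l _ =>
      (continuousOn_const.mul (contOn r (-(l : ℤ)) (-k' - 1) hρ hne)).circleIntegrable hρ.le
    have hgi : CircleIntegrable (fun z : ℂ => g z * z ^ (-k' - 1)) 0 ρ := by
      apply ContinuousOn.circleIntegrable hρ.le
      intro z hz
      have hz0 : z ≠ 0 := sphere_ne_zero hρ hz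
      have hzε : ‖z‖ < ε := by
        have h1 : ‖z‖ = ρ := mem_sphere_zero_iff_norm.mp hz
        linarith
      exact (((hg z hz0 hzε).continuousAt).mul
        (continuousAt_id.zpow₀ _ (Or.inl hz0))).continuousWithinAt
    have e1 : circleIntegral
        (fun s => (∑ l ∈ Finset.Icc 1 L, a l * (s - r) ^ (-(l : ℤ)) + g s) *
          s ^ (-k' - 1)) 0 ρ
        = ∮ z in C(0, ρ),
            ((∑ l ∈ Finset.Icc 1 L, a l * ((z - r) ^ (-(l : ℤ)) * z ^ (-k' - 1)))
              + g z * z ^ (-k' - 1)) := by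
      apply circleIntegral.integral_congr hρ.le
      intro z _
      simp only [add_mul, Finset.sum_mul, mul_assoc]
    rw [e1, cI_add (cI_sum_integrable _ _ _ _ hi) hgi, cI_sum _ _ _ _ hi]
    congr 1
    exact Finset.sum_congr rfl fun l _ => circleIntegral.integral_const_mul _ _ _ _
  rw [key γ hγ0 hneγ hγε, key β hβ hneβ (lt_of_le_of_lt hβγ hγε),
    g_diff hg (-k' - 1) hβ hβγ hγε]
  have hterm : ∀ l ∈ Finset.Icc 1 L,
      (∮ z in C(0, γ), (z - r) ^ (-(l : ℤ)) * z ^ (-k' - 1))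
        - (∮ z in C(0, β), (z - r) ^ (-(l : ℤ)) * z ^ (-k' - 1))
      = 2 * Real.pi * Complex.I * bin (((-k' - 1 : ℤ)) : ℂ) (l - 1)
          * r ^ (-k' - (l : ℤ)) := by
    intro l hl
    have hl1 : 1 ≤ l := (Finset.mem_Icc.mp hl).1
    have h := diff_eq r hr0 hβ hβr hrγ (l - 1) (-k' - 1)
    have ec : (-(((l - 1 : ℕ)) : ℤ) - 1) = (-(l : ℤ)) := by omega
    have ec2 : ((-k' - 1 : ℤ) - ((l - 1 : ℕ) : ℤ)) = (-k' - (l : ℤ)) := by omega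
    rw [ec, ec2] at h
    exact h
  have h2pi : (2 * (Real.pi : ℂ) * Complex.I) ≠ 0 := by
    simp [Real.pi_ne_zero, Complex.I_ne_zero]
  have hsplit : ((∑ l ∈ Finset.Icc 1 L, a l * ∮ z in C(0, γ), (z - r) ^ (-(l : ℤ)) * z ^ (-k' - 1))
        + (∮ z in C(0, β), g z * z ^ (-k' - 1)))
      - ((∑ l ∈ Finset.Icc 1 L, a l * ∮ z in C(0, β), (z - r) ^ (-(l : ℤ)) * z ^ (-k' - 1))
        + (∮ z in C(0, β), g z * z ^ (-k' - 1)))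
      = ∑ l ∈ Finset.Icc 1 L,
          (a l * (∮ z in C(0, γ), (z - r) ^ (-(l : ℤ)) * z ^ (-k' - 1))
            - a l * ∮ z in C(0, β), (z - r) ^ (-(l : ℤ)) * z ^ (-k' - 1)) := by
    rw [Finset.sum_sub_distrib]
    ring
  rw [hsplit, Finset.mul_sum]
  apply Finset.sum_congr rfl
  intro l hl
  have h := hterm l hl
  have e2 : a l * (∮ z in C(0, γ), (z - r) ^ (-(l : ℤ)) * z ^ (-k' - 1))
      - a l * (∮ z in C(0, β), (z - r) ^ (-(l : ℤ)) * z ^ (-k' - 1))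
      = a l * ((∮ z in C(0, γ), (z - r) ^ (-(l : ℤ)) * z ^ (-k' - 1))
        - (∮ z in C(0, β), (z - r) ^ (-(l : ℤ)) * z ^ (-k' - 1))) := by ring
  rw [e2, h]
  unfold bin
  have hπ : ((Real.pi : ℂ)) ≠ 0 := Complex.ofReal_ne_zero.mpr Real.pi_ne_zero
  have hI : Complex.I ≠ 0 := Complex.I_ne_zero
  have hfact : (((l - 1).factorial : ℕ) : ℂ) ≠ 0 := by exact_mod_cast (l - 1).factorial_ne_zero
  field_simp
end
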